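/- arXiv:1107.1480 — 2 statements merged into one kernel-verified Lean document; each statement's English description precedes it below -/
import Mathlib

section
/- For every n, the map φ'_n : Ω'_{n+1} → Ω'_n given by φ'_n(ω) = φ_n(ω)' is a group homomorphism with respect to the operation ∗: φ'_n(ω ∗ ξ) = φ'_n(ω) ∗ φ'_n(ξ) for all ω, ξ ∈ Ω'_{n+1}. -/
open Classical
noncomputable section

namespace GCG

/-- One-step backtrack reduction of a word: replace some substring `u v u` by `u`. -/
def ReduceStep {V : Type*} (l r : List V) : Prop :=
  ∃ (p s : List V) (u v : V), l = p ++ [u, v, u] ++ s ∧ r = p ++ [u] ++ s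

/-- A word is reduced if it admits no one-step reduction. -/
def IsReduced {V : Type*} (l : List V) : Prop := ∀ r, ¬ ReduceStep l r

/-- The reduction `ω'` of a word: the (for words in a simple graph, unique) reduced
word obtained from it by repeatedly replacing substrings `u v u` by `u`. -/
def reduce {V : Type*} (l : List V) : List V :=
  if h : ∃ r, Relation.ReflTransGen ReduceStep l r ∧ IsReduced r then h.choose else l

/-- Compress every maximal constant substring `u u ⋯ u` to the single letter `u`. -/
def compress {V : Type*} : List V → List V
  | [] => []
  | [a] => [a]
  | a :: b :: t => if a = b then compress (b :: t) else a :: compress (b :: t)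

/-- Delete–Replace–Compress along `f`: delete the letters sent into `S`
(the subdivision points), replace the remaining letters by their images,
and compress maximal constant substrings. -/
def DRC {V' V S : Type*} (f : V' → V ⊕ S) (w : List V') : List V :=
  compress (w.filterMap fun v => (f v).getLeft?)

/-- A word in a simple graph: a finite list of vertices in which consecutive
letters are distinct and joined by an edge. -/
def IsWord {V : Type*} (G : SimpleGraph V) (l : List V) : Prop := l.Chain' G.Adj

/-- A loop word at `x`: a word that starts and ends with `x`. -/
def IsLoopWord {V : Type*} (G : SimpleGraph V) (x : V) (l : List V) : Prop :=
  l.Chain' G.Adj ∧ l.head? = some x ∧ l.getLast? = some x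

/-- Concatenation of loop words: the duplicated base letter is dropped. -/
def lconcat {V : Type*} (ω ξ : List V) : List V := ω.dropLast ++ ξ

/-- `Gs` (on vertex set `V ⊕ S`) is the subdivision of `G` in which every edge is
evenly subdivided into `d` edges: every edge of `G` is replaced by a path of
length `d` through fresh interior vertices from `S`, these paths are compatible
with edge reversal, their interiors are pairwise disjoint, they exhaust `S`, and
their steps are exactly the edges of `Gs`. -/
def IsEvenSubdivision {V S : Type*} (G : SimpleGraph V) (d : ℕ)
    (Gs : SimpleGraph (V ⊕ S)) : Prop :=
  ∃ P : G.Dart → Fin (d + 1) → V ⊕ S,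
    (∀ e, P e 0 = Sum.inl e.toProd.1) ∧
    (∀ e, P e (Fin.last d) = Sum.inl e.toProd.2) ∧
    (∀ e (i : Fin (d + 1)), 0 < i.val → i.val < d → ∃ s : S, P e i = Sum.inr s) ∧
    (∀ e, Function.Injective (P e)) ∧
    (∀ e (i : Fin (d + 1)), P e.symm i = P e i.rev) ∧
    (∀ s : S, ∃ e i, P e i = Sum.inr s) ∧
    (∀ e e' (i i' : Fin (d + 1)), 0 < i.val → i.val < d → P e i = P e' i' →
      (e' = e ∧ i' = i) ∨ (e' = e.symm ∧ i' = i.rev)) ∧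
    (∀ a b, Gs.Adj a b ↔ ∃ e, ∃ i : Fin d, P e i.castSucc = a ∧ P e i.succ = b)

/-- The inverse sequence of finite connected simple graphs `X_n` with even
subdivisions `X*_n` and simplicial bonding surjections `f_n : X_{n+1} → X*_n`
mapping every edge onto an edge, together with coherent base vertices `x_n`. -/
structure GraphTower where
  V : ℕ → Type
  S : ℕ → Type
  finV : ∀ n, Finite (V n)
  G : ∀ n, SimpleGraph (V n)
  conn : ∀ n, (G n).Connected
  d : ℕ → ℕ
  two_le_d : ∀ n, 2 ≤ d n
  Gs : ∀ n, SimpleGraph (V n ⊕ S n)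
  subdiv : ∀ n, IsEvenSubdivision (G n) (d n) (Gs n)
  f : ∀ n, V (n + 1) → V n ⊕ S n
  f_surj : ∀ n, Function.Surjective (f n)
  f_simplicial : ∀ n ⦃u v⦄, (G (n + 1)).Adj u v → (Gs n).Adj (f n u) (f n v)
  f_edge_surj : ∀ n ⦃a b⦄, (Gs n).Adj a b →
    ∃ u v, (G (n + 1)).Adj u v ∧ f n u = a ∧ f n v = b
  x : ∀ n, V n
  f_base : ∀ n, f n (x (n + 1)) = Sum.inl (x n)

namespace GraphTower

/-- The projection `φ_n = DRC_n`. -/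
def phi (T : GraphTower) (n : ℕ) : List (T.V (n + 1)) → List (T.V n) := DRC (T.f n)

/-- The composite projection `φ_n ∘ φ_{n+1} ∘ ⋯ ∘ φ_{n+m-1}` (the identity for `m = 0`). -/
def proj (T : GraphTower) (n : ℕ) : (m : ℕ) → List (T.V (n + m)) → List (T.V n)
  | 0, w => w
  | m + 1, w => T.proj n m (T.phi (n + m) w)

/-- Membership in `Ω = lim←(Ω_n, φ_n)`: a coherent sequence of loop words. -/
def MemOmega (T : GraphTower) (ω : ∀ n, List (T.V n)) : Prop :=
  (∀ n, IsLoopWord (T.G n) (T.x n) (ω n)) ∧ ∀ n, T.phi n (ω (n + 1)) = ω n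

/-- Membership in `G = lim←(Ω'_n, φ'_n)`: a `φ'`-coherent sequence of reduced loop words. -/
def MemG (T : GraphTower) (g : ∀ n, List (T.V n)) : Prop :=
  (∀ n, IsLoopWord (T.G n) (T.x n) (g n) ∧ IsReduced (g n)) ∧
    ∀ n, reduce (T.phi n (g (n + 1))) = g n

/-- A sequence is locally eventually constant if for every fixed level `n` the
unreduced projections of its later terms to level `n` are eventually constant. -/
def LEC (T : GraphTower) (g : ∀ n, List (T.V n)) : Prop :=
  ∀ n, ∃ M, ∀ m, M ≤ m → T.proj n m (g (n + m)) = T.proj n M (g (n + M))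

/-- `ω` is the stabilization `←g` of `g`: for every level `n`, the projections of
the later terms of `g` to level `n` eventually equal `ω n`. -/
def IsStabilization (T : GraphTower) (g ω : ∀ n, List (T.V n)) : Prop :=
  ∀ n, ∃ M, ∀ m, M ≤ m → T.proj n m (g (n + m)) = ω n

/-- The identity word sequence `(x_n)_n`. -/
def seqOne (T : GraphTower) : ∀ n, List (T.V n) := fun n => [T.x n]

/-- Termwise concatenation followed by termwise reduction. -/
def seqMul (T : GraphTower) (g h : ∀ n, List (T.V n)) : ∀ n, List (T.V n) :=
  fun n => reduce (lconcat (g n) (h n))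

/-- Termwise reversal. -/
def seqInv (T : GraphTower) (g : ∀ n, List (T.V n)) : ∀ n, List (T.V n) :=
  fun n => (g n).reverse

/-- Membership in `←𝒢`: the stabilization of some locally eventually constant
element of `G`. -/
def MemSG (T : GraphTower) (ω : ∀ n, List (T.V n)) : Prop :=
  ∃ g, T.MemG g ∧ T.LEC g ∧ T.IsStabilization g ω

/-- `τ = ω ∗ ξ`: termwise concatenation, followed by termwise reduction,
followed by stabilization. -/
def star (T : GraphTower) (ω ξ τ : ∀ n, List (T.V n)) : Prop :=
  T.IsStabilization (fun n => reduce (lconcat (ω n) (ξ n))) τ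

end GraphTower

end GCG

namespace GCG

section Rewriting

variable {V : Type*}

/-- Prepend a letter to a word, performing the one possible front cancellation. -/
def push (a : V) : List V → List V
  | b :: c :: t => if c = a then c :: t else a :: b :: c :: t
  | l => a :: l

/-- Normal form of a word under backtrack reduction. -/
def nf : List V → List V
  | [] => []
  | a :: t => push a (nf t)

/-- Recursive reducedness predicate. -/
def Red : List V → Prop
  | a :: b :: c :: t => a ≠ c ∧ Red (b :: c :: t)
  | _ => True

lemma red_nil : Red ([] : List V) := by simp [Red]

lemma red_one (a : V) : Red [a] := by simp [Red]

lemma red_two (a b : V) : Red [a, b] := by simp [Red]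

lemma red_cons3 {a b c : V} {t : List V} :
    Red (a :: b :: c :: t) ↔ a ≠ c ∧ Red (b :: c :: t) := by simp [Red]

lemma red_tail {a : V} {l : List V} (h : Red (a :: l)) : Red l := by
  match l with
  | [] => exact red_nil
  | [b] => exact red_one b
  | b :: c :: t => exact (red_cons3.mp h).2

lemma red_no (p s : List V) (u v : V) : ¬ Red (p ++ [u, v, u] ++ s) := by
  induction p with
  | nil => exact fun h => (red_cons3.mp h).1 rfl
  | cons a p ih => exact fun h => ih (red_tail h)

lemma isReduced_of_red {l : List V} (h : Red l) : IsReduced l := by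
  rintro r ⟨p, s, u, v, hl, -⟩
  exact red_no p s u v (hl ▸ h)

lemma exists_step_of_not_red : ∀ {l : List V}, ¬ Red l → ∃ r, ReduceStep l r
  | [], h => absurd red_nil h
  | [a], h => absurd (red_one a) h
  | [a, b], h => absurd (red_two a b) h
  | a :: b :: c :: t, h => by
    by_cases hac : a = c
    · exact ⟨a :: t, [], t, a, b, by simp [hac], rfl⟩
    · obtain ⟨r, p, s, u, v, h1, h2⟩ := exists_step_of_not_red (fun hr => h (red_cons3.mpr ⟨hac, hr⟩))
      exact ⟨a :: r, a :: p, s, u, v, by rw [List.cons_append, List.cons_append, ← h1],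
        by rw [List.cons_append, List.cons_append, ← h2]⟩

lemma red_of_isReduced {l : List V} (h : IsReduced l) : Red l := by
  by_contra hn
  obtain ⟨r, hr⟩ := exists_step_of_not_red hn
  exact h r hr

lemma ReduceStep.cons {l r : List V} (a : V) (h : ReduceStep l r) :
    ReduceStep (a :: l) (a :: r) := by
  obtain ⟨p, s, u, v, rfl, rfl⟩ := h
  exact ⟨a :: p, s, u, v, rfl, rfl⟩

lemma rtg_cons {l r : List V} (a : V) (h : Relation.ReflTransGen ReduceStep l r) :
    Relation.ReflTransGen ReduceStep (a :: l) (a :: r) :=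
  Relation.ReflTransGen.lift (a :: ·) (fun _ _ => ReduceStep.cons a) _ _ h

lemma push_rtg (a : V) (l : List V) : Relation.ReflTransGen ReduceStep (a :: l) (push a l) := by
  match l with
  | [] => exact .refl
  | [b] => exact .refl
  | b :: c :: t =>
    simp only [push]
    split
    · next hca =>
      exact Relation.ReflTransGen.single ⟨[], t, a, b, by simp [hca], by simp [hca]⟩
    · exact .refl

lemma red_push (a : V) {l : List V} (hl : Red l) : Red (push a l) := by
  match l with
  | [] => exact red_one a
  | [b] => exact red_two a b
  | b :: c :: t =>
    simp only [push]
    split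
    · exact red_tail hl
    · next h => exact red_cons3.mpr ⟨fun e => h e.symm, hl⟩

lemma nf_red (l : List V) : Red (nf l) := by
  induction l with
  | nil => exact red_nil
  | cons a t ih => exact red_push a ih

lemma nf_rtg (l : List V) : Relation.ReflTransGen ReduceStep l (nf l) := by
  induction l with
  | nil => exact .refl
  | cons a t ih => exact (rtg_cons a ih).trans (push_rtg a (nf t))

lemma push_of_red {a : V} {l : List V} (h : Red (a :: l)) : push a l = a :: l := by
  match l with
  | [] => rfl
  | [b] => rfl
  | b :: c :: t =>
    simp only [push]
    exact if_neg (fun e => (red_cons3.mp h).1 e.symm)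

lemma nf_of_red {l : List V} (h : Red l) : nf l = l := by
  induction l with
  | nil => rfl
  | cons a t ih =>
    show push a (nf t) = a :: t
    rw [ih (red_tail h), push_of_red h]

lemma push_nil (a : V) : push a [] = [a] := rfl

lemma push_one (a b : V) : push a [b] = [a, b] := rfl

lemma push_pos {a c : V} (b : V) (t : List V) (h : c = a) :
    push a (b :: c :: t) = a :: t := by simp [push, h]

lemma push_neg {a c : V} (b : V) (t : List V) (h : c ≠ a) :
    push a (b :: c :: t) = a :: b :: c :: t := by simp [push, h]

lemma push_push (u v : V) {l : List V} (hl : Red l) :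
    push u (push v (push u l)) = push u l := by
  match l with
  | [] => rw [push_nil, push_one, push_pos v [] rfl]
  | [b] =>
    rw [push_one]
    by_cases hbv : b = v
    · rw [push_pos u [] hbv, push_one, hbv]
    · rw [push_neg u [] hbv, push_pos v [b] rfl]
  | b :: c :: t =>
    by_cases hcu : c = u
    · rw [push_pos b t hcu]
      cases t with
      | nil => rw [push_one, push_pos v [] rfl]
      | cons c2 t' =>
        by_cases hc2 : c2 = v
        · rw [push_pos u t' hc2]
          cases t' with
          | nil => rw [push_one, hc2]
          | cons d t'' =>
            have hud : d ≠ u := by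
              intro e
              exact (red_cons3.mp (red_cons3.mp hl).2).1 (hcu.trans e.symm)
            rw [push_neg v t'' hud, hc2]
        · rw [push_neg u t' hc2, push_pos v (c2 :: t') rfl]
    · rw [push_neg b t hcu]
      by_cases hbv : b = v
      · rw [push_pos u (c :: t) hbv, push_neg v t hcu, hbv]
      · rw [push_neg u (c :: t) hbv, push_pos v (b :: c :: t) rfl]

lemma nf_step {l r : List V} (h : ReduceStep l r) : nf l = nf r := by
  obtain ⟨p, s, u, v, rfl, rfl⟩ := h
  induction p with
  | nil =>
    show push u (push v (push u (nf s))) = push u (nf s)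
    exact push_push u v (nf_red s)
  | cons a p ih =>
    show push a (nf (p ++ [u, v, u] ++ s)) = push a (nf (p ++ [u] ++ s))
    rw [ih]

lemma nf_rtg_eq {l r : List V} (h : Relation.ReflTransGen ReduceStep l r) : nf l = nf r := by
  induction h with
  | refl => rfl
  | tail _ h ih => rw [ih, nf_step h]

lemma reduce_eq_nf (l : List V) : reduce l = nf l := by
  have hex : ∃ r, Relation.ReflTransGen ReduceStep l r ∧ IsReduced r :=
    ⟨nf l, nf_rtg l, isReduced_of_red (nf_red l)⟩
  rw [reduce, dif_pos hex]
  have hspec := hex.choose_spec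
  rw [nf_rtg_eq hspec.1]
  exact (nf_of_red (red_of_isReduced hspec.2)).symm

lemma step_head? {l r : List V} (h : ReduceStep l r) : r.head? = l.head? := by
  obtain ⟨p, s, u, v, rfl, rfl⟩ := h
  cases p <;> simp

lemma step_getLast? {l r : List V} (h : ReduceStep l r) : r.getLast? = l.getLast? := by
  obtain ⟨p, s, u, v, rfl, rfl⟩ := h
  cases s with
  | nil =>
    rw [show p ++ [u, v, u] ++ [] = (p ++ [u, v]) ++ [u] by simp,
      show p ++ [u] ++ [] = p ++ [u] by simp]
    simp [List.getLast?_concat]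
  | cons b s' =>
    rw [List.append_assoc, List.append_assoc,
      List.getLast?_append_of_ne_nil (l₁ := p), List.getLast?_append_of_ne_nil (l₁ := p)] <;>
      simp

lemma rtg_head? {l r : List V} (h : Relation.ReflTransGen ReduceStep l r) :
    r.head? = l.head? := by
  induction h with
  | refl => rfl
  | tail _ h ih => rw [step_head? h, ih]

lemma rtg_getLast? {l r : List V} (h : Relation.ReflTransGen ReduceStep l r) :
    r.getLast? = l.getLast? := by
  induction h with
  | refl => rfl
  | tail _ h ih => rw [step_getLast? h, ih]

lemma step_chain' {R : V → V → Prop} {l r : List V} (h : ReduceStep l r)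
    (hc : l.Chain' R) : r.Chain' R := by
  obtain ⟨p, s, u, v, rfl, rfl⟩ := h
  rw [List.append_assoc] at hc ⊢
  unfold List.Chain' at hc ⊢
  rw [List.isChain_append] at hc ⊢
  refine ⟨hc.1, ?_, ?_⟩
  · have h2 := hc.2.1
    simp only [List.cons_append, List.isChain_cons_cons] at h2 ⊢
    exact h2.2.2
  · have h3 := hc.2.2
    simpa using h3

end Rewriting

section Compress

variable {V : Type*}

lemma compress_cons (a : V) (l : List V) :
    compress (a :: l) = if l.head? = some a then compress l else a :: compress l := by
  cases l with
  | nil => simp [compress]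
  | cons b t =>
    simp only [compress, List.head?_cons, Option.some.injEq]
    by_cases h : a = b
    · rw [if_pos h, if_pos h.symm]
    · rw [if_neg h, if_neg (Ne.symm h)]

lemma compress_head? (l : List V) : (compress l).head? = l.head? := by
  induction l with
  | nil => rfl
  | cons a t ih =>
    rw [compress_cons]
    split
    · next h => rw [ih, h]; rfl
    · simp

lemma compress_ne_nil {l : List V} (h : l ≠ []) : compress l ≠ [] := by
  intro he
  have := compress_head? l
  rw [he] at this
  cases l with
  | nil => exact h rfl
  | cons a t => simp at this

lemma getLast?_cons_ne {a : V} {l : List V} (h : l ≠ []) :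
    (a :: l).getLast? = l.getLast? := by
  cases l with
  | nil => exact absurd rfl h
  | cons b t => exact List.getLast?_cons_cons

lemma compress_getLast? (l : List V) : (compress l).getLast? = l.getLast? := by
  induction l with
  | nil => rfl
  | cons a t ih =>
    rw [compress_cons]
    split
    · next h =>
      cases t with
      | nil => simp at h
      | cons b t' => rw [ih, List.getLast?_cons_cons]
    · next h =>
      cases t with
      | nil => simp [compress]
      | cons b t' =>
        have hne : compress (b :: t') ≠ [] := compress_ne_nil (by simp)
        rw [getLast?_cons_ne hne, ih, List.getLast?_cons_cons]

lemma compress_append_cons (L : List V) (a : V) (M : List V) :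
    compress (L ++ a :: M) = (compress (L ++ [a])).dropLast ++ compress (a :: M) := by
  induction L with
  | nil => simp [compress]
  | cons b L ih =>
    rw [List.cons_append, List.cons_append, compress_cons, compress_cons]
    have hhead : (L ++ a :: M).head? = (L ++ [a]).head? := by cases L <;> simp
    rw [hhead]
    split
    · exact ih
    · have hne : compress (L ++ [a]) ≠ [] := compress_ne_nil (by simp)
      rw [List.dropLast_cons_of_ne_nil hne, List.cons_append, ih]

lemma compress_dup (L : List V) (a : V) (M : List V) :
    compress (L ++ a :: a :: M) = compress (L ++ a :: M) := by
  rw [compress_append_cons, compress_append_cons L a M]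
  congr 1
  simp [compress]

lemma compress_snoc (L : List V) (a : V) :
    compress (L ++ [a]) = if L.getLast? = some a then compress L else compress L ++ [a] := by
  induction L with
  | nil => simp [compress]
  | cons b L ih =>
    rw [List.cons_append, compress_cons, compress_cons, ih]
    cases L with
    | nil =>
      rcases eq_or_ne a b with rfl | hab
      · simp [compress]
      · simp [compress, hab, Ne.symm hab]
    | cons c L' =>
      rw [List.getLast?_cons_cons]
      have h1 : ((c :: L') ++ [a]).head? = some c := rfl
      rw [h1, List.head?_cons]
      by_cases hcb : some c = some b
      · rw [if_pos hcb, if_pos hcb]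
      · rw [if_neg hcb, if_neg hcb]
        split <;> rfl

end Compress

section ListHelpers

variable {V : Type*}

lemma eq_head {l : List V} {x : V} (h : l.head? = some x) : l = x :: l.tail := by
  cases l with
  | nil => simp at h
  | cons a t => rw [List.head?_cons, Option.some_inj] at h; rw [h]; rfl

lemma eq_dropLast {l : List V} {x : V} (h : l.getLast? = some x) :
    l = l.dropLast ++ [x] := by
  induction l with
  | nil => simp at h
  | cons a t ih =>
    cases t with
    | nil =>
      simp only [List.getLast?_singleton, Option.some_inj] at h
      rw [h]; rfl
    | cons b t' =>
      rw [List.getLast?_cons_cons] at h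
      rw [List.dropLast_cons_of_ne_nil (by simp), List.cons_append, ← ih h]

lemma dropLast_append_ne {l₁ l₂ : List V} (h : l₂ ≠ []) :
    (l₁ ++ l₂).dropLast = l₁ ++ l₂.dropLast := by
  induction l₁ with
  | nil => rfl
  | cons a t ih =>
    rw [List.cons_append, List.dropLast_cons_of_ne_nil (by simp [h]), ih, List.cons_append]

lemma step_lconcat_left {a a' b : List V} {x : V} (ha : a.getLast? = some x)
    (hb : b.head? = some x) (h : ReduceStep a a') :
    ReduceStep (lconcat a b) (lconcat a' b) := by
  obtain ⟨p, s, u, v, rfl, rfl⟩ := h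
  unfold lconcat
  cases s with
  | nil =>
    have hux : u = x := by
      rw [show p ++ [u, v, u] ++ [] = (p ++ [u, v]) ++ [u] by simp,
        List.getLast?_concat, Option.some_inj] at ha
      exact ha
    have e1 : (p ++ [u, v, u] ++ []).dropLast = p ++ [u, v] := by
      rw [show p ++ [u, v, u] ++ [] = (p ++ [u, v]) ++ [u] by simp, List.dropLast_concat]
    have e2 : (p ++ [u] ++ []).dropLast = p := by
      rw [List.append_nil, List.dropLast_concat]
    rw [e1, e2]
    have hb' : b = u :: b.tail := by rw [hux]; exact eq_head hb
    refine ⟨p, b.tail, u, v, ?_, ?_⟩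
    · conv_lhs => rw [hb']
      simp
    · conv_lhs => rw [hb']
      simp
  | cons c s' =>
    have e1 : (p ++ [u, v, u] ++ c :: s').dropLast = p ++ [u, v, u] ++ (c :: s').dropLast := by
      rw [List.append_assoc, dropLast_append_ne (by simp), List.append_assoc]
      congr 1
    have e2 : (p ++ [u] ++ c :: s').dropLast = p ++ [u] ++ (c :: s').dropLast := by
      rw [List.append_assoc, dropLast_append_ne (by simp), List.append_assoc]
      congr 1
    rw [e1, e2]
    exact ⟨p, (c :: s').dropLast ++ b, u, v, by simp, by simp⟩

lemma step_lconcat_right {a b b' : List V} (h : ReduceStep b b') :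
    ReduceStep (lconcat a b) (lconcat a b') := by
  obtain ⟨p, s, u, v, rfl, rfl⟩ := h
  exact ⟨a.dropLast ++ p, s, u, v, by simp [lconcat], by simp [lconcat]⟩

lemma nf_lconcat_left {b : List V} {x : V} (hb : b.head? = some x) {a a' : List V}
    (h : Relation.ReflTransGen ReduceStep a a') (ha : a.getLast? = some x) :
    nf (lconcat a b) = nf (lconcat a' b) := by
  induction h with
  | refl => rfl
  | tail hsteps hstep ih =>
    rw [ih, nf_step (step_lconcat_left ((rtg_getLast? hsteps).trans ha) hb hstep)]

lemma nf_lconcat_right {a b b' : List V} (h : Relation.ReflTransGen ReduceStep b b') :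
    nf (lconcat a b) = nf (lconcat a b') := by
  induction h with
  | refl => rfl
  | tail _ hstep ih => rw [ih, nf_step (step_lconcat_right hstep)]

lemma key_list {Ap As : List V} {b c c' : V} (hc : Ap.getLast? = some c)
    (hc' : As.head? = some c') (hcc : c' ≠ b → c ≠ b → c = c') :
    compress (Ap ++ b :: As) = compress (Ap ++ As) ∨
      ReduceStep (compress (Ap ++ b :: As)) (compress (Ap ++ As)) := by
  by_cases h1 : c' = b
  · left
    have hAs : As = b :: As.tail := by rw [← h1]; exact eq_head hc'
    calc compress (Ap ++ b :: As) = compress (Ap ++ b :: b :: As.tail) := by rw [← hAs]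
      _ = compress (Ap ++ b :: As.tail) := compress_dup Ap b As.tail
      _ = compress (Ap ++ As) := by rw [← hAs]
  · by_cases h2 : c = b
    · left
      have hAp : Ap = Ap.dropLast ++ [b] := by rw [← h2]; exact eq_dropLast hc
      have e1 : Ap ++ b :: As = Ap.dropLast ++ b :: b :: As := by
        conv_lhs => rw [hAp]
        simp
      have e2 : Ap ++ As = Ap.dropLast ++ b :: As := by
        conv_lhs => rw [hAp]
        simp
      rw [e1, e2]
      exact compress_dup _ _ _
    · have hc'' : c = c' := hcc h1 h2
      right
      have eL : compress (Ap ++ b :: As) = compress Ap ++ b :: compress As := by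
        rw [compress_append_cons, compress_snoc,
          if_neg (by rw [hc]; exact fun e => h2 (Option.some_inj.mp e)),
          List.dropLast_concat, compress_cons,
          if_neg (by rw [hc']; exact fun e => h1 (Option.some_inj.mp e))]
      have hAs : As = c' :: As.tail := eq_head hc'
      have eR : compress (Ap ++ As) = (compress Ap).dropLast ++ compress As := by
        conv_lhs => rw [hAs]
        rw [compress_append_cons, compress_snoc, if_pos (by rw [hc, hc'']), ← hAs]
      rw [eL, eR]
      have hcl : (compress Ap).getLast? = some c := by rw [compress_getLast?, hc]
      have hch : (compress As).head? = some c' := by rw [compress_head?, hc']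
      have hD : compress Ap = (compress Ap).dropLast ++ [c] := eq_dropLast hcl
      have hE : compress As = c' :: (compress As).tail := eq_head hch
      refine ⟨(compress Ap).dropLast, (compress As).tail, c, b, ?_, ?_⟩
      · conv_lhs => rw [hD, hE]
        rw [← hc'']
        simp
      · conv_lhs => rw [hE]
        rw [← hc'']
        simp

lemma step_loop {G : SimpleGraph V} {x : V} {l r : List V} (h : ReduceStep l r)
    (hl : IsLoopWord G x l) : IsLoopWord G x r :=
  ⟨step_chain' h hl.1, (step_head? h).trans hl.2.1, (step_getLast? h).trans hl.2.2⟩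

lemma rtg_loop {G : SimpleGraph V} {x : V} {l r : List V}
    (h : Relation.ReflTransGen ReduceStep l r) (hl : IsLoopWord G x l) : IsLoopWord G x r := by
  induction h with
  | refl => exact hl
  | tail _ hstep ih => exact step_loop hstep ih

lemma loop_lconcat {G : SimpleGraph V} {x : V} {a b : List V} (ha : IsLoopWord G x a)
    (hb : IsLoopWord G x b) : IsLoopWord G x (lconcat a b) := by
  obtain ⟨t, rfl⟩ : ∃ t, a = t ++ [x] := ⟨a.dropLast, eq_dropLast ha.2.2⟩
  obtain ⟨tb, rfl⟩ : ∃ tb, b = x :: tb := ⟨b.tail, eq_head hb.2.1⟩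
  have hcc := List.isChain_append.mp ha.1
  refine ⟨?_, ?_, ?_⟩
  · show ((t ++ [x]).dropLast ++ (x :: tb)).Chain' G.Adj
    rw [List.dropLast_concat]
    exact List.isChain_append.mpr ⟨hcc.1, hb.1, fun y hy z hz => by
      have hz' : x = z := by simpa using hz
      rw [← hz']
      exact hcc.2.2 y hy x rfl⟩
  · show ((t ++ [x]).dropLast ++ (x :: tb)).head? = some x
    rw [List.dropLast_concat]
    cases t with
    | nil => rfl
    | cons a' t' =>
      have := ha.2.1
      rw [List.cons_append, List.head?_cons] at this
      rw [List.cons_append, List.head?_cons]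
      exact this
  · show ((t ++ [x]).dropLast ++ (x :: tb)).getLast? = some x
    rw [List.dropLast_concat, List.getLast?_append_of_ne_nil _ (by simp)]
    exact hb.2.2

end ListHelpers

section Graph

/-- The components of an even subdivision. -/
structure SubProps {V S : Type*} (G : SimpleGraph V) (d : ℕ) (Gs : SimpleGraph (V ⊕ S))
    (P : G.Dart → Fin (d + 1) → V ⊕ S) : Prop where
  h0 : ∀ e, P e 0 = Sum.inl e.toProd.1
  h1 : ∀ e, P e (Fin.last d) = Sum.inl e.toProd.2
  h2 : ∀ e (i : Fin (d + 1)), 0 < i.val → i.val < d → ∃ s : S, P e i = Sum.inr s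
  h3 : ∀ e, Function.Injective (P e)
  h4 : ∀ e (i : Fin (d + 1)), P e.symm i = P e i.rev
  h5 : ∀ s : S, ∃ e i, P e i = Sum.inr s
  h6 : ∀ e e' (i i' : Fin (d + 1)), 0 < i.val → i.val < d → P e i = P e' i' →
      (e' = e ∧ i' = i) ∨ (e' = e.symm ∧ i' = i.rev)
  h7 : ∀ a b, Gs.Adj a b ↔ ∃ e, ∃ i : Fin d, P e i.castSucc = a ∧ P e i.succ = b

variable {V S V' : Type*} {G : SimpleGraph V} {d : ℕ} {Gs : SimpleGraph (V ⊕ S)}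
  {P : G.Dart → Fin (d + 1) → V ⊕ S} {G' : SimpleGraph V'} {f : V' → V ⊕ S}

lemma inl_pos (hp : SubProps G d Gs P) {e : G.Dart} {j : Fin (d + 1)} {y : V}
    (h : P e j = Sum.inl y) : j.val = 0 ∨ j.val = d := by
  by_contra hcon
  push_neg at hcon
  obtain ⟨s0, hs0⟩ := hp.h2 e j (Nat.pos_of_ne_zero hcon.1)
    (lt_of_le_of_ne (Nat.lt_succ_iff.mp j.isLt) hcon.2)
  rw [h] at hs0
  simp at hs0

lemma eq_endpoint (hp : SubProps G d Gs P) {e : G.Dart} {j : Fin (d + 1)} {y : V}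
    (h : P e j = Sum.inl y) : y = e.toProd.1 ∨ y = e.toProd.2 := by
  rcases inl_pos hp h with h0 | hd'
  · left
    have hj : j = 0 := Fin.ext h0
    rw [hj, hp.h0] at h
    exact (Sum.inl.inj h).symm
  · right
    have hj : j = Fin.last d := Fin.ext hd'
    rw [hj, hp.h1] at h
    exact (Sum.inl.inj h).symm

lemma no_VV (hp : SubProps G d Gs P) (hd : 2 ≤ d) (a b : V) :
    ¬ Gs.Adj (Sum.inl a) (Sum.inl b) := by
  intro h
  obtain ⟨e, k, hk1, hk2⟩ := (hp.h7 _ _).mp h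
  have p1 := inl_pos hp hk1
  have p2 := inl_pos hp hk2
  have hk : k.val < d := k.isLt
  simp only [Fin.coe_castSucc, Fin.val_succ] at p1 p2
  omega

lemma neighbor (hp : SubProps G d Gs P) {e : G.Dart} {i : Fin (d + 1)} (h1 : 0 < i.val)
    (h2 : i.val < d) {z : V ⊕ S} (hadj : Gs.Adj (P e i) z) :
    ∃ j : Fin (d + 1), z = P e j ∧ (j.val + 1 = i.val ∨ i.val + 1 = j.val) := by
  obtain ⟨e', k, hk1, hk2⟩ := (hp.h7 _ _).mp hadj
  rcases hp.h6 e e' i k.castSucc h1 h2 hk1.symm with ⟨rfl, hki⟩ | ⟨he, hki⟩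
  · refine ⟨k.succ, hk2.symm, Or.inr ?_⟩
    have := congrArg Fin.val hki
    simp only [Fin.coe_castSucc] at this
    simp [Fin.val_succ, ← this]
  · subst he
    refine ⟨k.succ.rev, ?_, Or.inl ?_⟩
    · rw [← hk2, hp.h4]
    · have hval := congrArg Fin.val hki
      simp only [Fin.coe_castSucc, Fin.val_rev] at hval
      have hr : (k.succ.rev : Fin (d + 1)).val = (d + 1) - (k.val + 1 + 1) := by
        rw [Fin.val_rev, Fin.val_succ]
      have hk : k.val < d := k.isLt
      omega

/-- A walk entering the interior of a subdivided edge from the left exits at an endpoint. -/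
lemma exit (hp : SubProps G d Gs P) (hf : ∀ ⦃u v : V'⦄, G'.Adj u v → Gs.Adj (f u) (f v))
    (p : List V') :
    ∀ (u : V'), (p ++ [u]).Chain' G'.Adj →
      ∀ (e : G.Dart) (i : Fin (d + 1)), 0 < i.val → i.val < d → f u = P e i →
        p.filterMap (fun t => (f t).getLeft?) = [] ∨
          ∃ c, (p.filterMap (fun t => (f t).getLeft?)).getLast? = some c ∧
            (c = e.toProd.1 ∨ c = e.toProd.2) := by
  induction p using List.reverseRecOn with
  | nil => intro _ _ _ _ _ _ _; left; rfl
  | append_singleton q t ih =>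
    intro u hc e i hi1 hi2 hu
    have hcq : ((q ++ [t]) ++ [u]).Chain' G'.Adj := by simpa [List.append_assoc] using hc
    have hchain := List.isChain_append.mp hcq
    have hadj : G'.Adj t u :=
      hchain.2.2 t (by simp [List.getLast?_concat]) u (by simp)
    have hGs : Gs.Adj (P e i) (f t) := by
      rw [← hu]
      exact (hf hadj).symm
    obtain ⟨j, hj, hcase⟩ := neighbor hp hi1 hi2 hGs
    have hjd : j.val = 0 ∨ j.val = d ∨ (0 < j.val ∧ j.val < d) := by omega
    rcases hjd with hj0 | hjd' | ⟨ha, hb⟩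
    · have hft : f t = Sum.inl e.toProd.1 := by
        rw [hj, show j = (0 : Fin (d + 1)) from Fin.ext hj0, hp.h0]
      right
      refine ⟨e.toProd.1, ?_, Or.inl rfl⟩
      rw [List.filterMap_append]
      simp [hft]
    · have hft : f t = Sum.inl e.toProd.2 := by
        rw [hj, show j = Fin.last d from Fin.ext hjd', hp.h1]
      right
      refine ⟨e.toProd.2, ?_, Or.inr rfl⟩
      rw [List.filterMap_append]
      simp [hft]
    · obtain ⟨s0, hs0⟩ := hp.h2 e j ha hb
      have hft : (f t).getLeft? = none := by rw [hj, hs0]; rfl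
      have heq : (q ++ [t]).filterMap (fun t => (f t).getLeft?) =
          q.filterMap (fun t => (f t).getLeft?) := by
        rw [List.filterMap_append]
        simp [hft]
      rw [heq]
      exact ih t hchain.1 e j ha hb (hj ▸ rfl)

/-- A walk leaving the interior of a subdivided edge to the right enters at an endpoint. -/
lemma enter (hp : SubProps G d Gs P) (hf : ∀ ⦃u v : V'⦄, G'.Adj u v → Gs.Adj (f u) (f v))
    (s : List V') (u : V') (hc : (u :: s).Chain' G'.Adj)
    (e : G.Dart) (i : Fin (d + 1)) (hi1 : 0 < i.val) (hi2 : i.val < d) (hu : f u = P e i) :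
    s.filterMap (fun t => (f t).getLeft?) = [] ∨
      ∃ c, (s.filterMap (fun t => (f t).getLeft?)).head? = some c ∧
        (c = e.toProd.1 ∨ c = e.toProd.2) := by
  have hrev : (s.reverse ++ [u]).Chain' G'.Adj := by
    unfold List.Chain' at hc ⊢
    rw [← List.reverse_cons, List.isChain_reverse]
    exact (hc.imp fun a b hab => hab.symm)
  rcases exit hp hf s.reverse u hrev e i hi1 hi2 hu with hnil | ⟨c, hlast, hor⟩
  · left
    rw [List.filterMap_reverse] at hnil
    simpa using congrArg List.reverse hnil
  · right
    refine ⟨c, ?_, hor⟩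
    rw [List.filterMap_reverse, List.getLast?_reverse] at hlast
    exact hlast

end Graph

section Phi

lemma phi_step (T : GraphTower) (n : ℕ) {w w' : List (T.V (n + 1))}
    (hw : IsLoopWord (T.G (n + 1)) (T.x (n + 1)) w) (hs : ReduceStep w w') :
    T.phi n w = T.phi n w' ∨ ReduceStep (T.phi n w) (T.phi n w') := by
  obtain ⟨P, h0, h1, h2, h3, h4, h5, h6, h7⟩ := T.subdiv n
  have hp : SubProps (T.G n) (T.d n) (T.Gs n) P := ⟨h0, h1, h2, h3, h4, h5, h6, h7⟩
  obtain ⟨p, s, u, v, rfl, rfl⟩ := hs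
  have hadj : (T.G (n + 1)).Adj u v := by
    have hc := hw.1
    rw [show p ++ [u, v, u] ++ s = p ++ (u :: v :: u :: s) by simp] at hc
    exact (List.isChain_cons_cons.mp (List.isChain_append.mp hc).2.1).1
  have hphi : ∀ X : List (T.V (n + 1)),
      T.phi n X = compress (X.filterMap fun t => ((T.f n) t).getLeft?) := fun _ => rfl
  rw [hphi, hphi, List.filterMap_append, List.filterMap_append, List.filterMap_append,
    List.filterMap_append]
  cases huf : T.f n u with
  | inl a =>
    cases hvf : T.f n v with
    | inl b =>
      exact absurd (by rw [← huf, ← hvf]; exact T.f_simplicial n hadj)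
        (no_VV hp (T.two_le_d n) a b)
    | inr s1 =>
      left
      have e1 : [u, v, u].filterMap (fun t => ((T.f n) t).getLeft?) = [a, a] := by
        simp [huf, hvf]
      have e2 : [u].filterMap (fun t => ((T.f n) t).getLeft?) = [a] := by simp [huf]
      rw [e1, e2, List.append_assoc, List.append_assoc]
      exact compress_dup _ _ _
  | inr s0 =>
    obtain ⟨e, i, hei⟩ := h5 s0
    have hi1 : 0 < i.val := by
      rcases Nat.eq_zero_or_pos i.val with h | h
      · exfalso
        rw [show i = (0 : Fin (T.d n + 1)) from Fin.ext h, h0] at hei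
        simp at hei
      · exact h
    have hi2 : i.val < T.d n := by
      rcases lt_or_eq_of_le (Nat.lt_succ_iff.mp i.isLt) with h | h
      · exact h
      · exfalso
        rw [show i = Fin.last (T.d n) from Fin.ext h, h1] at hei
        simp at hei
    have hfu : T.f n u = P e i := by rw [huf, hei]
    cases hvf : T.f n v with
    | inr s1 =>
      left
      have e1 : [u, v, u].filterMap (fun t => ((T.f n) t).getLeft?) = [] := by
        simp [huf, hvf]
      have e2 : [u].filterMap (fun t => ((T.f n) t).getLeft?) = [] := by simp [huf]
      rw [e1, e2]
    | inl b =>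
      have e1 : [u, v, u].filterMap (fun t => ((T.f n) t).getLeft?) = [b] := by
        simp [huf, hvf]
      have e2 : [u].filterMap (fun t => ((T.f n) t).getLeft?) = [] := by simp [huf]
      rw [e1, e2]
      have hb : b = e.toProd.1 ∨ b = e.toProd.2 := by
        have hGs : (T.Gs n).Adj (P e i) (Sum.inl b) := by
          rw [← hfu, ← hvf]
          exact T.f_simplicial n hadj
        obtain ⟨j, hj, -⟩ := neighbor hp hi1 hi2 hGs
        exact eq_endpoint hp hj.symm
      have hApne : p.filterMap (fun t => ((T.f n) t).getLeft?) ≠ [] := by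
        cases p with
        | nil =>
          exfalso
          have hh := hw.2.1
          simp only [List.nil_append, List.cons_append, List.head?_cons,
            Option.some_inj] at hh
          rw [hh, T.f_base n] at huf
          simp at huf
        | cons a' p' =>
          have hh := hw.2.1
          simp only [List.cons_append, List.head?_cons, Option.some_inj] at hh
          have : T.f n a' = Sum.inl (T.x n) := by rw [hh, T.f_base n]
          simp [this]
      have hchain_pu : (p ++ [u]).Chain' (T.G (n + 1)).Adj := by
        have hc := hw.1
        rw [show p ++ [u, v, u] ++ s = (p ++ [u]) ++ ([v, u] ++ s) by simp] at hc
        exact (List.isChain_append.mp hc).1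
      have hchain_us : (u :: s).Chain' (T.G (n + 1)).Adj := by
        have hc := hw.1
        rw [show p ++ [u, v, u] ++ s = (p ++ [u, v]) ++ (u :: s) by simp] at hc
        exact (List.isChain_append.mp hc).2.1
      rcases exit hp (fun _ _ h => T.f_simplicial n h) p u hchain_pu e i hi1 hi2 hfu with
        hnil | ⟨c, hclast, hcend⟩
      · exact absurd hnil hApne
      rcases enter hp (fun _ _ h => T.f_simplicial n h) s u hchain_us e i hi1 hi2 hfu with
        hnil | ⟨c', hc'head, hc'end⟩
      · exfalso
        have hsne : s ≠ [] := by
          rintro rfl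
          have hh := hw.2.2
          rw [List.append_nil,
            show p ++ [u, v, u] = (p ++ [u, v]) ++ [u] by simp, List.getLast?_concat,
            Option.some_inj] at hh
          rw [hh, T.f_base n] at huf
          simp at huf
        have hlast : s.getLast? = some (T.x (n + 1)) := by
          have hh := hw.2.2
          rwa [List.getLast?_append_of_ne_nil _ hsne] at hh
        rw [eq_dropLast hlast, List.filterMap_append] at hnil
        simp [T.f_base n] at hnil
      · rw [show p.filterMap (fun t => ((T.f n) t).getLeft?) ++ [b] ++
            s.filterMap (fun t => ((T.f n) t).getLeft?) =
            p.filterMap (fun t => ((T.f n) t).getLeft?) ++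
            b :: s.filterMap (fun t => ((T.f n) t).getLeft?) by simp,
          show p.filterMap (fun t => ((T.f n) t).getLeft?) ++ [] ++
            s.filterMap (fun t => ((T.f n) t).getLeft?) =
            p.filterMap (fun t => ((T.f n) t).getLeft?) ++
            s.filterMap (fun t => ((T.f n) t).getLeft?) by simp]
        refine key_list hclast hc'head ?_
        intro h1' h2'
        rcases hb with rfl | rfl <;> rcases hcend with h | h <;> rcases hc'end with h' | h' <;>
          first
          | exact h.trans h'.symm
          | exact absurd h h2'
          | exact absurd h' h1'

lemma filterMap_loop_last (T : GraphTower) (n : ℕ) {ω : List (T.V (n + 1))}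
    (h : ω.getLast? = some (T.x (n + 1))) :
    ω.filterMap (fun t => ((T.f n) t).getLeft?) =
      ω.dropLast.filterMap (fun t => ((T.f n) t).getLeft?) ++ [T.x n] := by
  conv_lhs => rw [eq_dropLast h]
  rw [List.filterMap_append]
  simp [T.f_base n]

lemma filterMap_loop_head (T : GraphTower) (n : ℕ) {ξ : List (T.V (n + 1))}
    (h : ξ.head? = some (T.x (n + 1))) :
    ξ.filterMap (fun t => ((T.f n) t).getLeft?) =
      T.x n :: ξ.tail.filterMap (fun t => ((T.f n) t).getLeft?) := by
  conv_lhs => rw [eq_head h]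
  simp [T.f_base n]

lemma phi_lconcat (T : GraphTower) (n : ℕ) {ω ξ : List (T.V (n + 1))}
    (h1 : ω.getLast? = some (T.x (n + 1))) (h2 : ξ.head? = some (T.x (n + 1))) :
    T.phi n (lconcat ω ξ) = lconcat (T.phi n ω) (T.phi n ξ) := by
  have hphi : ∀ X : List (T.V (n + 1)),
      T.phi n X = compress (X.filterMap fun t => ((T.f n) t).getLeft?) := fun _ => rfl
  rw [hphi, hphi, hphi]
  unfold lconcat
  rw [List.filterMap_append, filterMap_loop_head T n h2, compress_append_cons,
    ← filterMap_loop_last T n h1, ← filterMap_loop_head T n h2]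

lemma phi_getLast (T : GraphTower) (n : ℕ) {ω : List (T.V (n + 1))}
    (h : ω.getLast? = some (T.x (n + 1))) : (T.phi n ω).getLast? = some (T.x n) := by
  show (compress _).getLast? = _
  rw [compress_getLast?, filterMap_loop_last T n h, List.getLast?_concat]

lemma phi_head (T : GraphTower) (n : ℕ) {ξ : List (T.V (n + 1))}
    (h : ξ.head? = some (T.x (n + 1))) : (T.phi n ξ).head? = some (T.x n) := by
  show (compress _).head? = _
  rw [compress_head?, filterMap_loop_head T n h]
  rfl

lemma nf_phi_rtg (T : GraphTower) (n : ℕ) {w w' : List (T.V (n + 1))}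
    (hw : IsLoopWord (T.G (n + 1)) (T.x (n + 1)) w)
    (h : Relation.ReflTransGen ReduceStep w w') : nf (T.phi n w) = nf (T.phi n w') := by
  induction h with
  | refl => rfl
  | tail hsteps hstep ih =>
    rcases phi_step T n (rtg_loop hsteps hw) hstep with he | hstep'
    · rw [ih, he]
    · rw [ih, nf_step hstep']

end Phi

/-- For every `n`, the map `φ'_n(ω) = φ_n(ω)'` is a homomorphism for
`∗`: for all reduced loop words `ω, ξ ∈ Ω'_{n+1}`,
`φ'_n(ω ∗ ξ) = φ'_n(ω) ∗ φ'_n(ξ)`. -/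
theorem statement_7 (T : GraphTower) (n : ℕ) (ω ξ : List (T.V (n + 1)))
    (hω : IsLoopWord (T.G (n + 1)) (T.x (n + 1)) ω) (hω' : IsReduced ω)
    (hξ : IsLoopWord (T.G (n + 1)) (T.x (n + 1)) ξ) (hξ' : IsReduced ξ) :
    reduce (T.phi n (reduce (lconcat ω ξ))) =
      reduce (lconcat (reduce (T.phi n ω)) (reduce (T.phi n ξ))) := by
  simp only [reduce_eq_nf]
  rw [← nf_phi_rtg T n (loop_lconcat hω hξ) (nf_rtg (lconcat ω ξ))]
  rw [phi_lconcat T n hω.2.2 hξ.2.1]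
  rw [← nf_lconcat_right (nf_rtg (T.phi n ξ))]
  rw [← nf_lconcat_left (phi_head T n hξ.2.1) (nf_rtg (T.phi n ω)) (phi_getLast T n hω.2.2)]

end GCG
end
end

section
/- In any weight system (L_n)_{n≥1}, for every n, writing L_n = (a_1, …, a_k), there exists an integer j ≥ 1 such that |L_{n+1}| = |L_n| − a_k/2^j. Consequently the sequence of lengths (|L_n|)_n is strictly decreasing and bounded below by 0, so the limit ‖L‖ = lim_{n→∞} |L_n| exists and ‖L‖ ≥ 0. -/
namespace WS

/-- One refinement step of the recursive weighting scheme: the entries of `a`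
are split into consecutive blocks of `b` (block `t` occupying the 0-indexed
positions `I t ≤ p < I (t+1)`), with `b[p] = a[t]/2^(p−I t+1)` within block `t`,
except that the first entry of each block after the first receives the
carryover `a[t−1]/2^(I t − I (t−1)) + a[t]/2`. -/
def SubdivStep (a b : List ℝ) : Prop :=
  ∃ I : ℕ → ℕ,
    I 0 = 0 ∧
    (∀ t, t < a.length → I t < I (t + 1)) ∧
    b.length = I a.length ∧
    (∀ t, t < a.length → ∀ p, I t ≤ p → p < I (t + 1) →
      b.getD p 0 =
        if 0 < t ∧ p = I t then
          a.getD (t - 1) 0 / 2 ^ (I t - I (t - 1)) + a.getD t 0 / 2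
        else a.getD t 0 / 2 ^ (p - I t + 1))

/-- A weight system: a sequence of nonempty finite lists of reals, starting with
`(1/2, 1/2², …, 1/2^s)` for some `s ≥ 1`, each obtained from the previous one by
a refinement step.  (Indexing starts at 0, so `L 0` is the paper's `L₁`.) -/
def IsWeightSystem (L : ℕ → List ℝ) : Prop :=
  (∀ n, L n ≠ []) ∧
  (∃ s : ℕ, 1 ≤ s ∧ L 0 = (List.range s).map fun i => (1 : ℝ) / 2 ^ (i + 1)) ∧
  ∀ n, SubdivStep (L n) (L (n + 1))

end WS

namespace WS

lemma geom_aux (x : ℝ) : ∀ n : ℕ, ∑ i ∈ Finset.range n, x / 2 ^ (i + 1) = x - x / 2 ^ n := by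
  intro n
  induction n with
  | zero => simp
  | succ n ih =>
    rw [Finset.sum_range_succ, ih]
    have h2 : (2:ℝ) ^ n ≠ 0 := by positivity
    field_simp
    ring

lemma sum_eq_range (l : List ℝ) : l.sum = ∑ i ∈ Finset.range l.length, l.getD i 0 := by
  induction l with
  | nil => simp
  | cons x xs ih =>
    rw [List.sum_cons, ih, List.length_cons, Finset.sum_range_succ']
    simp [add_comm]

lemma find_block (I : ℕ → ℕ) (k : ℕ) (hmono : ∀ t, t < k → I t < I (t + 1))
    (hI0 : I 0 = 0) :
    ∀ t, t ≤ k → ∀ p, p < I t → ∃ u, u < t ∧ I u ≤ p ∧ p < I (u + 1) := by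
  intro t
  induction t with
  | zero => intro _ p hp; omega
  | succ t ih =>
    intro ht p hp
    by_cases h : p < I t
    · obtain ⟨u, hu1, hu2, hu3⟩ := ih (by omega) p h
      exact ⟨u, by omega, hu2, hu3⟩
    · exact ⟨t, by omega, by omega, hp⟩

lemma step_pos {a b : List ℝ} (h : SubdivStep a b) (ha : ∀ x ∈ a, 0 < x) :
    ∀ x ∈ b, 0 < x := by
  obtain ⟨I, hI0, hmono, hlen, hval⟩ := h
  intro x hx
  obtain ⟨p, hp, rfl⟩ := List.mem_iff_getElem.mp hx
  have hp' : p < I a.length := hlen ▸ hp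
  obtain ⟨u, hu, hup, hup'⟩ := find_block I a.length hmono hI0 a.length le_rfl p hp'
  have hgd : b.getD p 0 = b[p] := List.getD_eq_getElem b 0 hp
  rw [← hgd, hval u hu p hup hup']
  have hau : 0 < a.getD u 0 := by
    rw [List.getD_eq_getElem a 0 hu]; exact ha _ (List.getElem_mem hu)
  split
  · have hu1 : u - 1 < a.length := by omega
    have h1 : 0 < a.getD (u - 1) 0 := by
      rw [List.getD_eq_getElem a 0 hu1]; exact ha _ (List.getElem_mem hu1)
    positivity
  · positivity

lemma step_sum {a b : List ℝ} (ha : a ≠ []) (h : SubdivStep a b) :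
    ∃ j : ℕ, 1 ≤ j ∧ b.sum = a.sum - a.getD (a.length - 1) 0 / 2 ^ j := by
  obtain ⟨I, hI0, hmono, hlen, hval⟩ := h
  have hk : 1 ≤ a.length := List.length_pos_iff.mpr ha
  have hblock : ∀ t, t < a.length →
      ∑ p ∈ Finset.Ico (I t) (I (t + 1)), b.getD p 0 =
        (if 0 < t then a.getD (t - 1) 0 / 2 ^ (I t - I (t - 1)) else 0) +
          a.getD t 0 - a.getD t 0 / 2 ^ (I (t + 1) - I t) := by
    intro t ht
    obtain ⟨m, hm⟩ : ∃ m, I (t + 1) - I t = m + 1 := by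
      have := hmono t ht; exact ⟨I (t + 1) - I t - 1, by omega⟩
    rw [Finset.sum_Ico_eq_sum_range, hm, Finset.sum_range_succ']
    have hIt := hmono t ht
    have e1 : ∀ d, d < m → b.getD (I t + (d + 1)) 0 = (a.getD t 0 / 2) / 2 ^ (d + 1) := by
      intro d hd
      rw [hval t ht (I t + (d + 1)) (by omega) (by omega)]
      have : ¬ (0 < t ∧ I t + (d + 1) = I t) := by omega
      rw [if_neg this]
      have : I t + (d + 1) - I t + 1 = d + 2 := by omega
      rw [this]
      rw [pow_succ]
      ring
    rw [Finset.sum_congr rfl (fun d hd => e1 d (Finset.mem_range.mp hd)), geom_aux]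
    have e0 : b.getD (I t + 0) 0 =
        (if 0 < t then a.getD (t - 1) 0 / 2 ^ (I t - I (t - 1)) else 0) + a.getD t 0 / 2 := by
      rw [hval t ht (I t + 0) (by omega) (by omega)]
      by_cases h0 : 0 < t
      · rw [if_pos ⟨h0, by omega⟩, if_pos h0]
      · rw [if_neg (by omega), if_neg h0]
        have : I t + 0 - I t + 1 = 1 := by omega
        rw [this]
        simp
    rw [e0]
    have : (2:ℝ) ^ (m + 1) = 2 ^ m * 2 := by rw [pow_succ]
    rw [this]
    have h2 : (2:ℝ) ^ m ≠ 0 := by positivity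
    set c : ℝ := if 0 < t then a.getD (t - 1) 0 / 2 ^ (I t - I (t - 1)) else 0 with hc
    field_simp
    ring
  have key : ∀ t, t ≤ a.length → 1 ≤ t →
      ∑ p ∈ Finset.range (I t), b.getD p 0 =
        (∑ i ∈ Finset.range t, a.getD i 0) - a.getD (t - 1) 0 / 2 ^ (I t - I (t - 1)) := by
    intro t
    induction t with
    | zero => intro _ h; omega
    | succ t ih =>
      intro ht _
      have ht' : t < a.length := by omega
      have hsplit := (Finset.sum_Ico_consecutive (fun p => b.getD p 0)
        (Nat.zero_le (I t)) (le_of_lt (hmono t ht'))).symm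
      simp only [← Finset.range_eq_Ico] at hsplit
      rw [hsplit, hblock t ht', Finset.sum_range_succ]
      by_cases h0 : 0 < t
      · rw [ih (by omega) h0, if_pos h0]
        simp only [Nat.add_sub_cancel]
        ring
      · have ht0 : t = 0 := by omega
        subst ht0
        rw [if_neg (by omega)]
        simp [hI0]
  obtain ⟨j, hj⟩ : ∃ j, I a.length - I (a.length - 1) = j ∧ 1 ≤ j := by
    have := hmono (a.length - 1) (by omega)
    have he : a.length - 1 + 1 = a.length := by omega
    rw [he] at this
    exact ⟨I a.length - I (a.length - 1), rfl, by omega⟩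
  refine ⟨j, hj.2, ?_⟩
  have hb : b.sum = ∑ p ∈ Finset.range (I a.length), b.getD p 0 := by
    rw [sum_eq_range, hlen]
  rw [hb, key a.length le_rfl hk, ← hj.1, sum_eq_range a]

/-- In any weight system, for every `n` there is an integer `j ≥ 1`
with `|L_{n+1}| = |L_n| − a_k/2^j` (`a_k` the last entry of `L n`); consequently
the lengths `|L_n|` are strictly decreasing and bounded below by `0`, so the
limit `‖L‖ = lim_n |L_n|` exists and is `≥ 0`. -/
theorem statement_11 (L : ℕ → List ℝ) (hL : IsWeightSystem L) :
    (∀ n, ∃ j : ℕ, 1 ≤ j ∧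
      (L (n + 1)).sum = (L n).sum - (L n).getD ((L n).length - 1) 0 / 2 ^ j) ∧
    StrictAnti (fun n => (L n).sum) ∧
    (∀ n, 0 ≤ (L n).sum) ∧
    ∃ ℓ : ℝ, Filter.Tendsto (fun n => (L n).sum) Filter.atTop (nhds ℓ) ∧ 0 ≤ ℓ := by
  obtain ⟨hne, ⟨s, hs1, hs0⟩, hstep⟩ := hL
  have hpos : ∀ n, ∀ x ∈ L n, 0 < x := by
    intro n
    induction n with
    | zero =>
      rw [hs0]
      intro x hx
      simp only [List.mem_map, List.mem_range] at hx
      obtain ⟨i, _, rfl⟩ := hx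
      positivity
    | succ n ih => exact step_pos (hstep n) ih
  have h1 : ∀ n, ∃ j : ℕ, 1 ≤ j ∧
      (L (n + 1)).sum = (L n).sum - (L n).getD ((L n).length - 1) 0 / 2 ^ j :=
    fun n => step_sum (hne n) (hstep n)
  have hanti : StrictAnti (fun n => (L n).sum) := by
    apply strictAnti_nat_of_succ_lt
    intro n
    obtain ⟨j, hj, heq⟩ := h1 n
    have hl : (L n).length - 1 < (L n).length := by
      have := List.length_pos_iff.mpr (hne n); omega
    have hlast : 0 < (L n).getD ((L n).length - 1) 0 := by
      rw [List.getD_eq_getElem _ 0 hl]; exact hpos n _ (List.getElem_mem hl)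
    have hd : 0 < (L n).getD ((L n).length - 1) 0 / 2 ^ j := by positivity
    simp only [heq]
    linarith
  have hnn : ∀ n, 0 ≤ (L n).sum :=
    fun n => List.sum_nonneg fun x hx => (hpos n x hx).le
  refine ⟨h1, hanti, hnn, ⟨⨅ n, (L n).sum, ?_, le_ciInf hnn⟩⟩
  exact tendsto_atTop_ciInf hanti.antitone ⟨0, by rintro _ ⟨n, rfl⟩; exact hnn n⟩

end WS
end
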